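/- Let λ, μ > 0, p ∈ (0,1], and let p̃ ∈ [0,1) satisfy λ(1−p)p̃² + (μ−λ+2λp)p̃ = λp, and assume λ + μ − 2λ(1−p)(1−p̃) ≠ 0. Set r := λ(1−p)(1−p̃)/(λ+μ), so 0 ≤ r < 1. If s̃ is a real number satisfying (1−p̃)·s̃ = Σ_{k=0}^∞ (μ/(λ+μ)) · r^k · ( (k+1)/(λ+μ) + k·s̃ ), then s̃ = 1 / ( λ + μ − 2λ(1−p)(1−p̃) ). -/

import Mathlib

set_option maxHeartbeats 1000000
set_option maxRecDepth 8000


/-- Solving the renewal series equation for `s̃ = E{S̄_n | Ẑ_n > S̄_n}` in the LCFS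
non-preemptive-priority M/M/1 queue with delivery errors. -/
theorem lcfs_nonpreemptive_stilde (lam mu p pt : ℝ)
    (hlam : 0 < lam) (hmu : 0 < mu) (hp : p ∈ Set.Ioc (0 : ℝ) 1)
    (hpt : pt ∈ Set.Ico (0 : ℝ) 1)
    (hquad : lam * (1 - p) * pt ^ 2 + (mu - lam + 2 * lam * p) * pt = lam * p)
    (hD : lam + mu - 2 * lam * (1 - p) * (1 - pt) ≠ 0)
    (r : ℝ) (hr : r = lam * (1 - p) * (1 - pt) / (lam + mu))
    (hr01 : 0 ≤ r ∧ r < 1)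
    (st : ℝ)
    (hst : (1 - pt) * st
      = ∑' k : ℕ, mu / (lam + mu) * r ^ k * (((k : ℝ) + 1) / (lam + mu) + (k : ℝ) * st)) :
    st = 1 / (lam + mu - 2 * lam * (1 - p) * (1 - pt)) := by
  obtain ⟨hr0, hr1⟩ := hr01
  have hM : (0:ℝ) < lam + mu := by linarith
  have hM0 : lam + mu ≠ 0 := ne_of_gt hM
  have hnr : ‖r‖ < 1 := by rw [Real.norm_eq_abs, abs_of_nonneg hr0]; exact hr1
  have hgeo : HasSum (fun k : ℕ => r ^ k) ((1 - r)⁻¹) := hasSum_geometric_of_norm_lt_one hnr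
  have hk : HasSum (fun k : ℕ => (k : ℝ) * r ^ k) (r / (1 - r) ^ 2) :=
    hasSum_coe_mul_geometric_of_norm_lt_one hnr
  have hS : HasSum (fun k : ℕ => mu / (lam + mu) * r ^ k * (((k : ℝ) + 1) / (lam + mu) + (k : ℝ) * st))
      (mu / (lam + mu) ^ 2 * (r / (1 - r) ^ 2) + mu / (lam + mu) ^ 2 * (1 - r)⁻¹
        + mu * st / (lam + mu) * (r / (1 - r) ^ 2)) := by
    have h1 := (hk.mul_left (mu / (lam + mu) ^ 2)).add (hgeo.mul_left (mu / (lam + mu) ^ 2))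
    have h2 := h1.add (hk.mul_left (mu * st / (lam + mu)))
    convert h2 using 2 with k
    · rfl
    field_simp
  have key := hst.trans hS.tsum_eq
  have h1r : (1:ℝ) - r ≠ 0 := by intro h; linarith
  -- translate to polynomial form
  have hMA : lam + mu - lam * (1 - p) * (1 - pt) ≠ 0 := by
    intro h
    apply h1r
    rw [hr]
    field_simp
    linarith
  have hrM : (lam + mu) * r = lam * (1 - p) * (1 - pt) := by
    rw [hr]; field_simp
  have h1rM : (lam + mu) * (1 - r) = lam + mu - lam * (1 - p) * (1 - pt) := by
    rw [hr]; field_simp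
  have key2 : (1 - pt) * st * ((lam + mu) ^ 2 * (1 - r) ^ 2)
      = mu * r + mu * (1 - r) + mu * st * r * (lam + mu) := by
    rw [key]; field_simp
  have hlin : (1 - pt) * st * (lam + mu - lam * (1 - p) * (1 - pt)) ^ 2
      = mu + mu * (lam * (1 - p) * (1 - pt)) * st := by
    apply mul_left_cancel₀ hM0
    linear_combination (lam + mu) * key2
      - (1 - pt) * st * (lam + mu) * ((lam + mu - lam * (1 - p) * (1 - pt)) + (lam + mu) * (1 - r)) * h1rM
      + mu * st * (lam + mu) * hrM
  have hexpr : (1 - pt) * (lam + mu - lam * (1 - p) * (1 - pt)) ^ 2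
      - mu * (lam * (1 - p) * (1 - pt))
      = mu * (lam + mu - 2 * lam * (1 - p) * (1 - pt)) := by
    linear_combination (-(lam + mu - lam * (1 - p) * (1 - pt))) * hquad
  have hfin : st * (mu * (lam + mu - 2 * lam * (1 - p) * (1 - pt))) = mu := by
    linear_combination hlin - st * hexpr
  rw [eq_div_iff hD]
  exact mul_left_cancel₀ (ne_of_gt hmu) (by linear_combination hfin)
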